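/- The measure M is not superadditive: for the two-qubit state σ'' = (1/4)|φ⟩⟨φ| + (3/8)(|01⟩⟨01| + |10⟩⟨10|) with |φ⟩ = (|00⟩+|11⟩)/√2, one has M_{A|B}(σ'') = 1/4 but M_{AC|BD}(σ'' ⊗ σ'') = 1/8 < 2·(1/4). -/

import Mathlib

open Matrix Kronecker Finset
open scoped ComplexOrder

attribute [local instance] Classical.propDecidable

noncomputable section

/-- nearest integer multiple of `y` to `x`, ties broken downward; `0` if `y = 0`. -/
def nim (y x : ℝ) : ℝ :=
  if y = 0 then 0
  else if x - y * ⌊x / y⌋ ≤ y * ⌈x / y⌉ - x then y * ⌊x / y⌋ else y * ⌈x / y⌉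

/-- partial trace over the second (B) factor -/
def ptraceB {α β : Type*} [Fintype α] [Fintype β]
    (ρ : Matrix (α × β) (α × β) ℂ) : Matrix α α ℂ :=
  fun a a' => ∑ b : β, ρ (a, b) (a', b)

/-- partial trace over the first (A) factor -/
def ptraceA {α β : Type*} [Fintype α] [Fintype β]
    (ρ : Matrix (α × β) (α × β) ℂ) : Matrix β β ℂ :=
  fun b b' => ∑ a : α, ρ (a, b) (a, b')

/-- the (real) eigenvalues of a Hermitian matrix, junk value `0` otherwise -/
def evalsR {n : Type*} [Fintype n] [DecidableEq n] (A : Matrix n n ℂ) : n → ℝ :=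
  if h : A.IsHermitian then h.eigenvalues else 0

/-- orthogonal projection onto the η-eigenspace of a Hermitian matrix -/
def eigProj {n : Type*} [Fintype n] [DecidableEq n] (ρ : Matrix n n ℂ) (η : ℝ) :
    Matrix n n ℂ :=
  if h : ρ.IsHermitian then
    ∑ k ∈ univ.filter (fun k => h.eigenvalues k = η),
      vecMulVec (fun i => h.eigenvectorBasis k i) (star fun i => h.eigenvectorBasis k i)
  else 0

/-- truncation of ρ down to the η-eigenspace: `η • P_η` -/
def trunc {n : Type*} [Fintype n] [DecidableEq n] (ρ : Matrix n n ℂ) (η : ℝ) :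
    Matrix n n ℂ := (η : ℂ) • eigProj ρ η

/-- dimension of the η-eigenspace -/
def dimEig {n : Type*} [Fintype n] [DecidableEq n] (ρ : Matrix n n ℂ) (η : ℝ) : ℕ :=
  if h : ρ.IsHermitian then (univ.filter (fun k => h.eigenvalues k = η)).card else 0

/-- a single term of the measure `M` -/
def Mterm (η T lam : ℝ) : ℝ := -(|lam - nim η lam| * Real.logb 2 (lam / T))

/-- the measure `M` seen from side A -/
def MmeasA {α β : Type*} [Fintype α] [Fintype β] [DecidableEq α] [DecidableEq β]
    (ρ : Matrix (α × β) (α × β) ℂ) : ℝ :=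
  ∑ η ∈ Finset.image (evalsR ρ) univ, ∑ i : α,
    Mterm η (η * (dimEig ρ η : ℝ)) (evalsR (ptraceB (trunc ρ η)) i)

/-- the measure `M` seen from side B -/
def MmeasB {α β : Type*} [Fintype α] [Fintype β] [DecidableEq α] [DecidableEq β]
    (ρ : Matrix (α × β) (α × β) ℂ) : ℝ :=
  ∑ η ∈ Finset.image (evalsR ρ) univ, ∑ i : β,
    Mterm η (η * (dimEig ρ η : ℝ)) (evalsR (ptraceA (trunc ρ η)) i)

/-- the measure `M` of nonclassical correlation -/
def Mmeas {α β : Type*} [Fintype α] [Fintype β] [DecidableEq α] [DecidableEq β]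
    (ρ : Matrix (α × β) (α × β) ℂ) : ℝ := (MmeasA ρ + MmeasB ρ) / 2

def IsDensityMatrix {n : Type*} [Fintype n] [DecidableEq n] (ρ : Matrix n n ℂ) : Prop :=
  ρ.PosSemidef ∧ ρ.trace = 1

/-- ρ admits an eigenbasis consisting of product vectors -/
def HasProductEigenbasis {α β : Type*} [Fintype α] [Fintype β] [DecidableEq α] [DecidableEq β]
    (ρ : Matrix (α × β) (α × β) ℂ) : Prop :=
  ∃ (a : α → α → ℂ) (b : β → β → ℂ) (e : α → β → ℝ),
    (∀ j j', ∑ i, star (a j i) * a j' i = if j = j' then 1 else 0) ∧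
    (∀ k k', ∑ i, star (b k i) * b k' i = if k = k' then 1 else 0) ∧
    ρ = ∑ j : α, ∑ k : β,
      (e j k : ℂ) • (vecMulVec (a j) (star (a j)) ⊗ₖ vecMulVec (b k) (star (b k)))


def ket00 : Fin 2 × Fin 2 → ℂ := fun p => if p = (0, 0) then 1 else 0
def ket01 : Fin 2 × Fin 2 → ℂ := fun p => if p = (0, 1) then 1 else 0
def ket10 : Fin 2 × Fin 2 → ℂ := fun p => if p = (1, 0) then 1 else 0
/-- `|1+⟩ = |1⟩ ⊗ (|0⟩ + |1⟩)/√2` -/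
def ket1p : Fin 2 × Fin 2 → ℂ := fun p => if p.1 = 1 then ((1 / Real.sqrt 2 : ℝ) : ℂ) else 0
/-- `|φ⟩ = (|00⟩ + |11⟩)/√2` -/
def ketBell : Fin 2 × Fin 2 → ℂ := fun p => if p.1 = p.2 then ((1 / Real.sqrt 2 : ℝ) : ℂ) else 0

/-- `ρ ⊗ σ` regarded as a bipartite state across the `AC|BD` cut -/
def regroupKron {α β γ δ : Type*}
    (ρ : Matrix (α × β) (α × β) ℂ) (σ : Matrix (γ × δ) (γ × δ) ℂ) :
    Matrix ((α × γ) × (β × δ)) ((α × γ) × (β × δ)) ℂ :=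
  fun p q => (ρ ⊗ₖ σ) ((p.1.1, p.2.1), (p.1.2, p.2.2)) ((q.1.1, q.2.1), (q.1.2, q.2.2))

/-- `σ'' = (1/4)|φ⟩⟨φ| + (3/8)(|01⟩⟨01| + |10⟩⟨10|)` with `|φ⟩ = (|00⟩+|11⟩)/√2` -/
def sigmaPP : Matrix (Fin 2 × Fin 2) (Fin 2 × Fin 2) ℂ :=
  ((1 / 4 : ℝ) : ℂ) • vecMulVec ketBell (star ketBell)
  + ((3 / 8 : ℝ) : ℂ) • (vecMulVec ket01 (star ket01) + vecMulVec ket10 (star ket10))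


/-! ### Auxiliary machinery -/

set_option linter.unusedSectionVars false
set_option maxHeartbeats 1000000

section AuxSpectral

lemma sum_mulVec' {n : Type*} [Fintype n] {ι : Type*} (s : Finset ι) (f : ι → Matrix n n ℂ) (v : n → ℂ) :
    (∑ i ∈ s, f i) *ᵥ v = ∑ i ∈ s, f i *ᵥ v := by
  ext j
  simp only [mulVec, dotProduct, Matrix.sum_apply, Finset.sum_apply, Finset.sum_mul]
  exact Finset.sum_comm

lemma trace_vecMulVec_star {n : Type*} [Fintype n] [DecidableEq n] (u : n → ℂ) :
    (vecMulVec u (star u)).trace = ∑ i, (starRingEnd ℂ) (u i) * u i := by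
  rw [Matrix.trace]
  refine Finset.sum_congr rfl (fun i _ => ?_)
  simp only [Matrix.diag, vecMulVec, of_apply, Pi.star_apply, RingHom.coe_coe]
  rw [mul_comm]
  rfl

lemma matrix_eq_of_basis {n ι : Type*} [Fintype n] [DecidableEq n] [Fintype ι] (M N : Matrix n n ℂ)
    (b : Module.Basis ι ℂ (EuclideanSpace ℂ n))
    (hb : ∀ i, M *ᵥ ⇑(b i) = N *ᵥ ⇑(b i)) : M = N := by
  have key : (Matrix.mulVecLin M).comp (WithLp.linearEquiv 2 ℂ (n → ℂ)).toLinearMap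
      = (Matrix.mulVecLin N).comp (WithLp.linearEquiv 2 ℂ (n → ℂ)).toLinearMap :=
    Module.Basis.ext b (fun i => hb i)
  have h2 : ∀ v : n → ℂ, M *ᵥ v = N *ᵥ v := by
    intro v
    have := congrArg (fun f => f ((WithLp.linearEquiv 2 ℂ (n → ℂ)).symm v)) key
    simpa using this
  apply Matrix.toLin'.injective
  ext v
  simp [Matrix.toLin'_apply, h2]

lemma vecMulVec_mulVec {n : Type*} [Fintype n] (u v w : n → ℂ) :
    vecMulVec u v *ᵥ w = (∑ i, v i * w i) • u := by
  ext i
  simp only [vecMulVec, mulVec, dotProduct, Pi.smul_apply, smul_eq_mul, Finset.sum_mul, of_apply]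
  exact Finset.sum_congr rfl (fun j _ => by ring)

section Main
variable {n : Type*} [Fintype n] [DecidableEq n]
variable {ρ : Matrix n n ℂ} {S : Finset ℝ} {P : ℝ → Matrix n n ℂ}

structure SpecData (ρ : Matrix n n ℂ) (S : Finset ℝ) (P : ℝ → Matrix n n ℂ) : Prop where
  decomp : ρ = ∑ η ∈ S, (η:ℂ) • P η
  herm : ∀ η ∈ S, (P η).IsHermitian
  orth : ∀ η ∈ S, ∀ μ ∈ S, P η * P μ = if η = μ then P η else 0
  sum_eq : ∑ η ∈ S, P η = 1
  ne : ∀ η ∈ S, P η ≠ 0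

namespace SpecData
variable (hD : SpecData ρ S P)
include hD

lemma isHermitian : ρ.IsHermitian := by
  rw [hD.decomp]
  unfold Matrix.IsHermitian
  rw [conjTranspose_sum]
  refine Finset.sum_congr rfl (fun η hη => ?_)
  rw [conjTranspose_smul, (hD.herm η hη), Complex.star_def, Complex.conj_ofReal]

lemma mul_proj {η : ℝ} (hη : η ∈ S) : ρ * P η = (η:ℂ) • P η := by
  rw [hD.decomp, Finset.sum_mul]
  rw [Finset.sum_eq_single η]
  · rw [smul_mul_assoc, hD.orth η hη η hη, if_pos rfl]
  · intro μ hμ hne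
    rw [smul_mul_assoc, hD.orth μ hμ η hη, if_neg hne, smul_zero]
  · intro h; exact absurd hη h

lemma proj_mul {η : ℝ} (hη : η ∈ S) : P η * ρ = (η:ℂ) • P η := by
  rw [hD.decomp, Finset.mul_sum]
  rw [Finset.sum_eq_single η]
  · rw [mul_smul_comm, hD.orth η hη η hη, if_pos rfl]
  · intro μ hμ hne
    rw [mul_smul_comm, hD.orth η hη μ hμ, if_neg (fun he => hne he.symm), smul_zero]
  · intro h; exact absurd hη h

lemma proj_mulVec_eigvec_of_ne {η : ℝ} (hη : η ∈ S) (k : n)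
    (hne : η ≠ hD.isHermitian.eigenvalues k) :
    P η *ᵥ (fun i => hD.isHermitian.eigenvectorBasis k i) = 0 := by
  set h := hD.isHermitian with hh
  set v : n → ℂ := fun i => h.eigenvectorBasis k i with hv
  have hmv : ρ *ᵥ v = h.eigenvalues k • v := h.mulVec_eigenvectorBasis k
  have h1 : P η *ᵥ (ρ *ᵥ v) = (η:ℂ) • (P η *ᵥ v) := by
    rw [Matrix.mulVec_mulVec, hD.proj_mul hη, Matrix.smul_mulVec]
  have h2 : P η *ᵥ (ρ *ᵥ v) = ((h.eigenvalues k : ℝ) : ℂ) • (P η *ᵥ v) := by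
    rw [hmv, Matrix.mulVec_smul]
    ext i
    simp [Complex.real_smul]
  have h3 : (((η : ℂ) - (h.eigenvalues k : ℝ)) : ℂ) • (P η *ᵥ v) = 0 := by
    rw [sub_smul, ← h1, ← h2, sub_self]
  rcases smul_eq_zero.mp h3 with h4 | h4
  · exact absurd (Complex.ofReal_inj.mp (by linear_combination h4)) hne
  · exact h4

lemma eigenvalues_mem (k : n) : hD.isHermitian.eigenvalues k ∈ S := by
  set h := hD.isHermitian with hh
  by_contra hc
  have hv : (fun i => h.eigenvectorBasis k i) = (1 : Matrix n n ℂ) *ᵥ (fun i => h.eigenvectorBasis k i) := by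
    rw [Matrix.one_mulVec]
  rw [← hD.sum_eq, sum_mulVec'] at hv
  have hz : (fun i => h.eigenvectorBasis k i) = (0 : n → ℂ) := by
    rw [hv]
    apply Finset.sum_eq_zero
    intro η hη
    exact hD.proj_mulVec_eigvec_of_ne hη k (fun he => hc (he ▸ hη))
  have : h.eigenvectorBasis k = 0 := by ext i; exact congrFun hz i
  exact h.eigenvectorBasis.orthonormal.ne_zero k this

lemma proj_mulVec_eigvec_of_eq {η : ℝ} (hη : η ∈ S) (k : n)
    (heq : η = hD.isHermitian.eigenvalues k) :
    P η *ᵥ (fun i => hD.isHermitian.eigenvectorBasis k i)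
      = (fun i => hD.isHermitian.eigenvectorBasis k i) := by
  set h := hD.isHermitian with hh
  have hv : (fun i => h.eigenvectorBasis k i) = (1 : Matrix n n ℂ) *ᵥ (fun i => h.eigenvectorBasis k i) := by
    rw [Matrix.one_mulVec]
  rw [← hD.sum_eq, sum_mulVec'] at hv
  rw [Finset.sum_eq_single η] at hv
  · exact hv.symm
  · intro μ hμ hne
    exact hD.proj_mulVec_eigvec_of_ne hμ k (fun he => hne (by rw [he, ← heq]))
  · intro hns; exact absurd hη hns

lemma inner_sum_eq (k j : n) :
    (∑ i, (star fun i => hD.isHermitian.eigenvectorBasis k i) i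
        * hD.isHermitian.eigenvectorBasis j i) = if k = j then 1 else 0 := by
  set h := hD.isHermitian with hh
  have horth := h.eigenvectorBasis.orthonormal
  rw [orthonormal_iff_ite] at horth
  have hin := horth k j
  rw [PiLp.inner_apply] at hin
  rw [← hin]
  exact Finset.sum_congr rfl (fun i _ => by
    simp only [Pi.star_apply, RCLike.inner_apply]
    exact mul_comm _ _)

lemma eigProj_eq {η : ℝ} (hη : η ∈ S) : eigProj ρ η = P η := by
  classical
  set h := hD.isHermitian with hh
  rw [eigProj, dif_pos h]
  apply matrix_eq_of_basis _ _ h.eigenvectorBasis.toBasis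
  intro j
  rw [OrthonormalBasis.coe_toBasis]
  rw [show ⇑(h.eigenvectorBasis j) = (fun i => h.eigenvectorBasis j i) from rfl]
  rw [sum_mulVec']
  have key : ∀ k, vecMulVec (fun i => h.eigenvectorBasis k i) (star fun i => h.eigenvectorBasis k i)
      *ᵥ (fun i => h.eigenvectorBasis j i)
      = if k = j then (fun i => h.eigenvectorBasis j i) else 0 := by
    intro k
    rw [_root_.vecMulVec_mulVec, hD.inner_sum_eq k j]
    by_cases hkj : k = j
    · subst hkj; simp
    · simp [hkj]
  by_cases hj : h.eigenvalues j = η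
  · rw [hD.proj_mulVec_eigvec_of_eq hη j hj.symm]
    rw [Finset.sum_eq_single j]
    · rw [key, if_pos rfl]
    · intro k hk hne
      rw [key, if_neg hne]
    · intro hns
      exact absurd (Finset.mem_filter.mpr ⟨Finset.mem_univ j, hj⟩) hns
  · rw [hD.proj_mulVec_eigvec_of_ne hη j (fun he => hj he.symm)]
    apply Finset.sum_eq_zero
    intro k hk
    rw [key, if_neg]
    intro hkj
    subst hkj
    exact hj (Finset.mem_filter.mp hk).2

lemma image_evalsR : Finset.image (evalsR ρ) Finset.univ = S := by
  classical
  set h := hD.isHermitian with hh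
  apply Finset.Subset.antisymm
  · intro η hη
    rw [Finset.mem_image] at hη
    obtain ⟨k, _, hk⟩ := hη
    rw [evalsR, dif_pos h] at hk
    exact hk ▸ hD.eigenvalues_mem k
  · intro η hη
    by_contra hc
    have hz : eigProj ρ η = 0 := by
      rw [eigProj, dif_pos h]
      apply Finset.sum_eq_zero
      intro k hk
      exfalso
      apply hc
      rw [Finset.mem_image]
      exact ⟨k, Finset.mem_univ k, by rw [evalsR, dif_pos h]; exact (Finset.mem_filter.mp hk).2⟩
    rw [hD.eigProj_eq hη] at hz
    exact hD.ne η hη hz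

lemma trace_eq_dimEig {η : ℝ} (hη : η ∈ S) : (P η).trace = (dimEig ρ η : ℂ) := by
  classical
  set h := hD.isHermitian with hh
  rw [← hD.eigProj_eq hη, eigProj, dif_pos h, dimEig, dif_pos h, Matrix.trace_sum]
  rw [Finset.card_eq_sum_ones, Nat.cast_sum]
  apply Finset.sum_congr rfl
  intro k _
  rw [Nat.cast_one, trace_vecMulVec_star]
  have := hD.inner_sum_eq k k
  rw [if_pos rfl] at this
  rw [← this]
  exact Finset.sum_congr rfl (fun i _ => by simp)

end SpecData

/-- eigenvalues of a real scalar matrix -/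
lemma evalsR_smul_one {n : Type*} [Fintype n] [DecidableEq n] [Nonempty n] (c : ℝ) (i : n) :
    evalsR ((c : ℂ) • (1 : Matrix n n ℂ)) i = c := by
  classical
  have h : ((c : ℂ) • (1 : Matrix n n ℂ)).IsHermitian := by
    unfold Matrix.IsHermitian
    rw [conjTranspose_smul, conjTranspose_one, Complex.star_def, Complex.conj_ofReal]
  rw [evalsR, dif_pos h]
  have h1 : ((c : ℂ) • (1 : Matrix n n ℂ)) *ᵥ (fun j => h.eigenvectorBasis i j)
      = h.eigenvalues i • (fun j => h.eigenvectorBasis i j) := h.mulVec_eigenvectorBasis i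
  rw [Matrix.smul_mulVec, Matrix.one_mulVec] at h1
  have hnz : (fun j => h.eigenvectorBasis i j) ≠ (0 : n → ℂ) := by
    intro hz
    exact h.eigenvectorBasis.orthonormal.ne_zero i (by ext j; exact congrFun hz j)
  obtain ⟨j, hj⟩ := Function.ne_iff.mp hnz
  have h2 := congrFun h1 j
  have h3 : (c : ℂ) * h.eigenvectorBasis i j
      = ((h.eigenvalues i : ℝ) : ℂ) * h.eigenvectorBasis i j := by
    simpa [Complex.real_smul] using h2
  have hj' : h.eigenvectorBasis i j ≠ (0 : ℂ) := hj
  have h4 : (c : ℂ) = ((h.eigenvalues i : ℝ) : ℂ) := mul_right_cancel₀ hj' h3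
  exact (Complex.ofReal_inj.mp h4).symm

end Main
end AuxSpectral

section AuxRegroup
variable {α β γ δ : Type*} [Fintype α] [Fintype β] [Fintype γ] [Fintype δ]
  [DecidableEq α] [DecidableEq β] [DecidableEq γ] [DecidableEq δ]

lemma regroupKron_eq (A : Matrix (α × β) (α × β) ℂ) (B : Matrix (γ × δ) (γ × δ) ℂ) :
    regroupKron A B = (A ⊗ₖ B).submatrix (Equiv.prodProdProdComm α γ β δ) (Equiv.prodProdProdComm α γ β δ) := rfl

lemma regroupKron_mul (A C : Matrix (α × β) (α × β) ℂ) (B D : Matrix (γ × δ) (γ × δ) ℂ) :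
    regroupKron A B * regroupKron C D = regroupKron (A * C) (B * D) := by
  rw [regroupKron_eq, regroupKron_eq, regroupKron_eq, submatrix_mul_equiv, ← mul_kronecker_mul]

lemma regroupKron_one : regroupKron (1 : Matrix (α × β) (α × β) ℂ) (1 : Matrix (γ × δ) (γ × δ) ℂ) = 1 := by
  rw [regroupKron_eq, one_kronecker_one, submatrix_one_equiv]

lemma regroupKron_add_left (A C : Matrix (α × β) (α × β) ℂ) (B : Matrix (γ × δ) (γ × δ) ℂ) :
    regroupKron (A + C) B = regroupKron A B + regroupKron C B := by
  rw [regroupKron_eq, regroupKron_eq, regroupKron_eq, add_kronecker, submatrix_add]; rfl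

lemma regroupKron_add_right (A : Matrix (α × β) (α × β) ℂ) (B D : Matrix (γ × δ) (γ × δ) ℂ) :
    regroupKron A (B + D) = regroupKron A B + regroupKron A D := by
  rw [regroupKron_eq, regroupKron_eq, regroupKron_eq, kronecker_add, submatrix_add]; rfl

lemma regroupKron_smul_left (c : ℂ) (A : Matrix (α × β) (α × β) ℂ) (B : Matrix (γ × δ) (γ × δ) ℂ) :
    regroupKron (c • A) B = c • regroupKron A B := by
  rw [regroupKron_eq, regroupKron_eq, smul_kronecker, submatrix_smul]; rfl

lemma regroupKron_smul_right (c : ℂ) (A : Matrix (α × β) (α × β) ℂ) (B : Matrix (γ × δ) (γ × δ) ℂ) :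
    regroupKron A (c • B) = c • regroupKron A B := by
  rw [regroupKron_eq, regroupKron_eq, kronecker_smul, submatrix_smul]; rfl

lemma regroupKron_conjTranspose (A : Matrix (α × β) (α × β) ℂ) (B : Matrix (γ × δ) (γ × δ) ℂ) :
    (regroupKron A B)ᴴ = regroupKron Aᴴ Bᴴ := by
  ext p q
  simp [regroupKron, conjTranspose_apply, kroneckerMap_apply, star_mul', mul_comm]

lemma regroupKron_trace (A : Matrix (α × β) (α × β) ℂ) (B : Matrix (γ × δ) (γ × δ) ℂ) :
    (regroupKron A B).trace = A.trace * B.trace := by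
  have h1 : (regroupKron A B).trace = (A ⊗ₖ B).trace := by
    rw [regroupKron_eq, Matrix.trace, Matrix.trace]
    exact Fintype.sum_equiv (Equiv.prodProdProdComm α γ β δ) _ _ (fun p => rfl)
  rw [h1, trace_kronecker]

lemma ptraceB_regroupKron (A : Matrix (α × β) (α × β) ℂ) (B : Matrix (γ × δ) (γ × δ) ℂ) :
    ptraceB (regroupKron A B) = ptraceB A ⊗ₖ ptraceB B := by
  ext ⟨a, c⟩ ⟨a', c'⟩
  simp only [ptraceB, regroupKron, kroneckerMap_apply, Fintype.sum_prod_type, of_apply]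
  rw [Finset.sum_mul_sum]

lemma ptraceA_regroupKron (A : Matrix (α × β) (α × β) ℂ) (B : Matrix (γ × δ) (γ × δ) ℂ) :
    ptraceA (regroupKron A B) = ptraceA A ⊗ₖ ptraceA B := by
  ext ⟨b, d⟩ ⟨b', d'⟩
  simp only [ptraceA, regroupKron, kroneckerMap_apply, Fintype.sum_prod_type, of_apply]
  rw [Finset.sum_mul_sum]

lemma regroupKron_zero_left (B : Matrix (γ × δ) (γ × δ) ℂ) :
    regroupKron (0 : Matrix (α × β) (α × β) ℂ) B = 0 := by
  ext p q; simp [regroupKron, kroneckerMap_apply]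

lemma regroupKron_zero_right (A : Matrix (α × β) (α × β) ℂ) :
    regroupKron A (0 : Matrix (γ × δ) (γ × δ) ℂ) = 0 := by
  ext p q; simp [regroupKron, kroneckerMap_apply]

lemma ptraceB_smul (c : ℂ) (A : Matrix (α × β) (α × β) ℂ) :
    ptraceB (c • A) = c • ptraceB A := by
  ext a a'; simp [ptraceB, Finset.mul_sum]

lemma ptraceA_smul (c : ℂ) (A : Matrix (α × β) (α × β) ℂ) :
    ptraceA (c • A) = c • ptraceA A := by
  ext a a'; simp [ptraceA, Finset.mul_sum]

lemma ptraceB_add (A B : Matrix (α × β) (α × β) ℂ) :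
    ptraceB (A + B) = ptraceB A + ptraceB B := by
  ext a a'; simp [ptraceB, Finset.sum_add_distrib]

lemma ptraceA_add (A B : Matrix (α × β) (α × β) ℂ) :
    ptraceA (A + B) = ptraceA A + ptraceA B := by
  ext a a'; simp [ptraceA, Finset.sum_add_distrib]

lemma ptraceB_zero : ptraceB (0 : Matrix (α × β) (α × β) ℂ) = 0 := by
  ext a a'; simp [ptraceB]

lemma ptraceA_zero : ptraceA (0 : Matrix (α × β) (α × β) ℂ) = 0 := by
  ext a a'; simp [ptraceA]

end AuxRegroup

lemma ne_zero_of_trace {n : Type*} [Fintype n] [DecidableEq n] {M : Matrix n n ℂ}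
    (h : M.trace ≠ 0) : M ≠ 0 := fun he => h (by rw [he, Matrix.trace_zero])

section AuxConcrete

def ketPsiM : Fin 2 × Fin 2 → ℂ := fun p =>
  if p = (0,0) then ((1 / Real.sqrt 2 : ℝ) : ℂ)
  else if p = (1,1) then -((1 / Real.sqrt 2 : ℝ) : ℂ) else 0

def P0 : Matrix (Fin 2 × Fin 2) (Fin 2 × Fin 2) ℂ := vecMulVec ketPsiM (star ketPsiM)
def P1 : Matrix (Fin 2 × Fin 2) (Fin 2 × Fin 2) ℂ := vecMulVec ketBell (star ketBell)
def P2 : Matrix (Fin 2 × Fin 2) (Fin 2 × Fin 2) ℂ :=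
  vecMulVec ket01 (star ket01) + vecMulVec ket10 (star ket10)

lemma vmv_mul {n : Type*} [Fintype n] (u v w x : n → ℂ) :
    vecMulVec u v * vecMulVec w x = (∑ i, v i * w i) • vecMulVec u x := by
  ext a b
  simp only [Matrix.mul_apply, vecMulVec, of_apply, Matrix.smul_apply, smul_eq_mul, Finset.sum_mul]
  exact Finset.sum_congr rfl (fun i _ => by ring)

lemma sqrt2_mul : ((Real.sqrt 2 : ℝ) : ℂ) * ((Real.sqrt 2 : ℝ) : ℂ) = 2 := by
  rw [← Complex.ofReal_mul, Real.mul_self_sqrt (by norm_num)]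
  norm_num

lemma inv2 : ((Real.sqrt 2 : ℝ) : ℂ)⁻¹ * ((Real.sqrt 2 : ℝ) : ℂ)⁻¹ = 2⁻¹ := by
  rw [← mul_inv, sqrt2_mul]

lemma ip_bell_bell : (∑ i, (star ketBell) i * ketBell i) = 1 := by
  simp [Fintype.sum_prod_type, Fin.sum_univ_two, ketBell, Complex.star_def, Complex.conj_ofReal]
  norm_num [inv2]
lemma ip_psim_psim : (∑ i, (star ketPsiM) i * ketPsiM i) = 1 := by
  simp [Fintype.sum_prod_type, Fin.sum_univ_two, ketPsiM, Complex.star_def, Complex.conj_ofReal]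
  norm_num [inv2]
lemma ip_psim_bell : (∑ i, (star ketPsiM) i * ketBell i) = 0 := by
  simp [Fintype.sum_prod_type, Fin.sum_univ_two, ketPsiM, ketBell, Complex.star_def, Complex.conj_ofReal]
lemma ip_bell_psim : (∑ i, (star ketBell) i * ketPsiM i) = 0 := by
  simp [Fintype.sum_prod_type, Fin.sum_univ_two, ketPsiM, ketBell, Complex.star_def, Complex.conj_ofReal]
lemma ip_01_01 : (∑ i, (star ket01) i * ket01 i) = 1 := by
  simp [Fintype.sum_prod_type, Fin.sum_univ_two, ket01, Complex.star_def]
lemma ip_10_10 : (∑ i, (star ket10) i * ket10 i) = 1 := by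
  simp [Fintype.sum_prod_type, Fin.sum_univ_two, ket10, Complex.star_def]
lemma ip_01_10 : (∑ i, (star ket01) i * ket10 i) = 0 := by
  simp [Fintype.sum_prod_type, Fin.sum_univ_two, ket01, ket10, Complex.star_def]
lemma ip_10_01 : (∑ i, (star ket10) i * ket01 i) = 0 := by
  simp [Fintype.sum_prod_type, Fin.sum_univ_two, ket01, ket10, Complex.star_def]
lemma ip_01_bell : (∑ i, (star ket01) i * ketBell i) = 0 := by
  simp [Fintype.sum_prod_type, Fin.sum_univ_two, ket01, ketBell, Complex.star_def]
lemma ip_bell_01 : (∑ i, (star ketBell) i * ket01 i) = 0 := by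
  simp [Fintype.sum_prod_type, Fin.sum_univ_two, ket01, ketBell, Complex.star_def]
lemma ip_10_bell : (∑ i, (star ket10) i * ketBell i) = 0 := by
  simp [Fintype.sum_prod_type, Fin.sum_univ_two, ket10, ketBell, Complex.star_def]
lemma ip_bell_10 : (∑ i, (star ketBell) i * ket10 i) = 0 := by
  simp [Fintype.sum_prod_type, Fin.sum_univ_two, ket10, ketBell, Complex.star_def]
lemma ip_01_psim : (∑ i, (star ket01) i * ketPsiM i) = 0 := by
  simp [Fintype.sum_prod_type, Fin.sum_univ_two, ket01, ketPsiM, Complex.star_def]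
lemma ip_psim_01 : (∑ i, (star ketPsiM) i * ket01 i) = 0 := by
  simp [Fintype.sum_prod_type, Fin.sum_univ_two, ket01, ketPsiM, Complex.star_def]
lemma ip_10_psim : (∑ i, (star ket10) i * ketPsiM i) = 0 := by
  simp [Fintype.sum_prod_type, Fin.sum_univ_two, ket10, ketPsiM, Complex.star_def]
lemma ip_psim_10 : (∑ i, (star ketPsiM) i * ket10 i) = 0 := by
  simp [Fintype.sum_prod_type, Fin.sum_univ_two, ket10, ketPsiM, Complex.star_def]

lemma P0_mul_P0 : P0 * P0 = P0 := by rw [P0, vmv_mul, ip_psim_psim, one_smul]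
lemma P1_mul_P1 : P1 * P1 = P1 := by rw [P1, vmv_mul, ip_bell_bell, one_smul]
lemma P0_mul_P1 : P0 * P1 = 0 := by rw [P0, P1, vmv_mul, ip_psim_bell, zero_smul]
lemma P1_mul_P0 : P1 * P0 = 0 := by rw [P0, P1, vmv_mul, ip_bell_psim, zero_smul]
lemma P0_mul_P2 : P0 * P2 = 0 := by
  rw [P0, P2, mul_add, vmv_mul, vmv_mul, ip_psim_01, ip_psim_10]; simp
lemma P2_mul_P0 : P2 * P0 = 0 := by
  rw [P0, P2, add_mul, vmv_mul, vmv_mul, ip_01_psim, ip_10_psim]; simp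
lemma P1_mul_P2 : P1 * P2 = 0 := by
  rw [P1, P2, mul_add, vmv_mul, vmv_mul, ip_bell_01, ip_bell_10]; simp
lemma P2_mul_P1 : P2 * P1 = 0 := by
  rw [P1, P2, add_mul, vmv_mul, vmv_mul, ip_01_bell, ip_10_bell]; simp
lemma P2_mul_P2 : P2 * P2 = P2 := by
  rw [P2, add_mul, mul_add, mul_add, vmv_mul, vmv_mul, vmv_mul, vmv_mul,
    ip_01_01, ip_01_10, ip_10_01, ip_10_10]
  simp [P2]

lemma vmv_herm {n : Type*} [Fintype n] [DecidableEq n] (u : n → ℂ) :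
    (vecMulVec u (star u)).IsHermitian := by
  unfold Matrix.IsHermitian
  ext a b
  simp only [conjTranspose_apply, vecMulVec, of_apply, Pi.star_apply, Complex.star_def,
    _root_.map_mul, Complex.conj_conj]
  ring

lemma P0_herm : P0.IsHermitian := vmv_herm _
lemma P1_herm : P1.IsHermitian := vmv_herm _
lemma P2_herm : P2.IsHermitian := (vmv_herm ket01).add (vmv_herm ket10)

lemma trace_P0 : P0.trace = 1 := by
  rw [P0, trace_vecMulVec_star]
  have := ip_psim_psim
  simpa [Complex.star_def] using this
lemma trace_P1 : P1.trace = 1 := by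
  rw [P1, trace_vecMulVec_star]
  have := ip_bell_bell
  simpa [Complex.star_def] using this
lemma trace_P2 : P2.trace = 2 := by
  rw [P2, Matrix.trace_add, trace_vecMulVec_star, trace_vecMulVec_star]
  have h1 := ip_01_01
  have h2 := ip_10_10
  simp only [Pi.star_apply, Complex.star_def] at h1 h2
  rw [h1, h2]; norm_num

lemma P_sum : P0 + P1 + P2 = 1 := by
  ext ⟨a, b⟩ ⟨c, d⟩
  fin_cases a <;> fin_cases b <;> fin_cases c <;> fin_cases d <;>
    simp [P0, P1, P2, vecMulVec, ketPsiM, ketBell, ket01, ket10, Matrix.one_apply,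
      Complex.star_def, Complex.conj_ofReal, Prod.ext_iff] <;>
    norm_num [inv2]

lemma ptraceB_P0 : ptraceB P0 = ((1/2 : ℝ) : ℂ) • 1 := by
  ext a a'
  fin_cases a <;> fin_cases a' <;>
    simp [ptraceB, P0, vecMulVec, ketPsiM, Fin.sum_univ_two, Matrix.one_apply,
      Complex.star_def, Complex.conj_ofReal, Prod.ext_iff] <;> norm_num [inv2]
lemma ptraceB_P1 : ptraceB P1 = ((1/2 : ℝ) : ℂ) • 1 := by
  ext a a'
  fin_cases a <;> fin_cases a' <;>
    simp [ptraceB, P1, vecMulVec, ketBell, Fin.sum_univ_two, Matrix.one_apply,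
      Complex.star_def, Complex.conj_ofReal, Prod.ext_iff] <;> norm_num [inv2]
lemma ptraceB_P2 : ptraceB P2 = ((1 : ℝ) : ℂ) • 1 := by
  ext a a'
  fin_cases a <;> fin_cases a' <;>
    simp [ptraceB, P2, vecMulVec, ket01, ket10, Fin.sum_univ_two, Matrix.one_apply,
      Complex.star_def, Prod.ext_iff]
lemma ptraceA_P0 : ptraceA P0 = ((1/2 : ℝ) : ℂ) • 1 := by
  ext a a'
  fin_cases a <;> fin_cases a' <;>
    simp [ptraceA, P0, vecMulVec, ketPsiM, Fin.sum_univ_two, Matrix.one_apply,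
      Complex.star_def, Complex.conj_ofReal, Prod.ext_iff] <;> norm_num [inv2]
lemma ptraceA_P1 : ptraceA P1 = ((1/2 : ℝ) : ℂ) • 1 := by
  ext a a'
  fin_cases a <;> fin_cases a' <;>
    simp [ptraceA, P1, vecMulVec, ketBell, Fin.sum_univ_two, Matrix.one_apply,
      Complex.star_def, Complex.conj_ofReal, Prod.ext_iff] <;> norm_num [inv2]
lemma ptraceA_P2 : ptraceA P2 = ((1 : ℝ) : ℂ) • 1 := by
  ext a a'
  fin_cases a <;> fin_cases a' <;>
    simp [ptraceA, P2, vecMulVec, ket01, ket10, Fin.sum_univ_two, Matrix.one_apply,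
      Complex.star_def, Prod.ext_iff]

end AuxConcrete

section AuxNim

lemma nim_self (y : ℝ) : nim y y = y := by
  unfold nim
  by_cases hy : y = 0
  · simp [hy]
  · rw [if_neg hy, div_self hy]
    norm_num

lemma nim_zero_right (y : ℝ) : nim y 0 = 0 := by
  unfold nim
  by_cases hy : y = 0
  · simp [hy]
  · rw [if_neg hy]
    norm_num

lemma Mterm_self (y T : ℝ) : Mterm y T y = 0 := by
  unfold Mterm
  rw [nim_self, sub_self, abs_zero, zero_mul, neg_zero]

lemma Mterm_lam_zero (y T : ℝ) : Mterm y T 0 = 0 := by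
  unfold Mterm
  rw [nim_zero_right, sub_self, abs_zero, zero_mul, neg_zero]

lemma logb_half : Real.logb 2 (1/2 : ℝ) = -1 := by
  rw [one_div, Real.logb_inv, Real.logb_self_eq_one] <;> norm_num

lemma logb_quarter : Real.logb 2 (1/4 : ℝ) = -2 := by
  rw [one_div, Real.logb_inv, show (4:ℝ) = 2^(2:ℕ) by norm_num, Real.logb_pow,
    Real.logb_self_eq_one] <;> norm_num

lemma Mterm_quarter : Mterm (1/4) (1/4) (1/8) = 1/8 := by
  have hc : ⌈(1:ℝ)/2⌉ = 1 := by rw [Int.ceil_eq_iff] <;> norm_num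
  unfold Mterm nim
  rw [if_neg (by norm_num)]
  norm_num [hc, logb_half]

lemma Mterm_sixteenth : Mterm (1/16) (1/16) (1/64) = 1/32 := by
  have hc : ⌈(1:ℝ)/4⌉ = 1 := by rw [Int.ceil_eq_iff] <;> norm_num
  unfold Mterm nim
  rw [if_neg (by norm_num)]
  norm_num [hc, logb_quarter]

end AuxNim

section AuxAssembly

def Sσ : Finset ℝ := {0, 1/4, 3/8}
def Pσ : ℝ → Matrix (Fin 2 × Fin 2) (Fin 2 × Fin 2) ℂ := fun η =>
  if η = 0 then P0 else if η = 1/4 then P1 else if η = 3/8 then P2 else 0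

lemma Pσ_0 : Pσ 0 = P0 := by simp [Pσ]
lemma Pσ_q : Pσ (1/4) = P1 := by norm_num [Pσ]
lemma Pσ_e : Pσ (3/8) = P2 := by norm_num [Pσ]

lemma mem_Sσ_0 : (0:ℝ) ∈ Sσ := by norm_num [Sσ]
lemma mem_Sσ_q : (1/4:ℝ) ∈ Sσ := by norm_num [Sσ]
lemma mem_Sσ_e : (3/8:ℝ) ∈ Sσ := by norm_num [Sσ]

lemma sum_Sσ {M : Type*} [AddCommMonoid M] (f : ℝ → M) :
    ∑ η ∈ Sσ, f η = f 0 + (f (1/4) + f (3/8)) := by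
  rw [Sσ, Finset.sum_insert (by norm_num), Finset.sum_insert (by norm_num),
    Finset.sum_singleton]

lemma sigma_eq : sigmaPP = ((1/4 : ℝ) : ℂ) • P1 + ((3/8 : ℝ) : ℂ) • P2 := rfl

lemma specσ : SpecData sigmaPP Sσ Pσ := by
  constructor
  · rw [sum_Sσ, Pσ_0, Pσ_q, Pσ_e, sigma_eq]
    norm_num
  · intro η hη
    rw [Sσ] at hη
    simp only [Finset.mem_insert, Finset.mem_singleton] at hη
    rcases hη with rfl | rfl | rfl
    · rw [Pσ_0]; exact P0_herm
    · rw [Pσ_q]; exact P1_herm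
    · rw [Pσ_e]; exact P2_herm
  · intro η hη μ hμ
    rw [Sσ] at hη hμ
    simp only [Finset.mem_insert, Finset.mem_singleton] at hη hμ
    rcases hη with rfl | rfl | rfl <;> rcases hμ with rfl | rfl | rfl <;>
      norm_num [Pσ_0, Pσ_q, Pσ_e, P0_mul_P0, P0_mul_P1, P0_mul_P2, P1_mul_P0,
        P1_mul_P1, P1_mul_P2, P2_mul_P0, P2_mul_P1, P2_mul_P2]
  · rw [sum_Sσ, Pσ_0, Pσ_q, Pσ_e, ← add_assoc, P_sum]
  · intro η hη
    rw [Sσ] at hη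
    simp only [Finset.mem_insert, Finset.mem_singleton] at hη
    rcases hη with rfl | rfl | rfl
    · rw [Pσ_0]; exact ne_zero_of_trace (by rw [trace_P0]; norm_num)
    · rw [Pσ_q]; exact ne_zero_of_trace (by rw [trace_P1]; norm_num)
    · rw [Pσ_e]; exact ne_zero_of_trace (by rw [trace_P2]; norm_num)

lemma dimEig_σ_q : dimEig sigmaPP (1/4) = 1 := by
  have h := specσ.trace_eq_dimEig mem_Sσ_q
  rw [Pσ_q, trace_P1] at h
  exact_mod_cast h.symm

lemma dimEig_σ_e : dimEig sigmaPP (3/8) = 2 := by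
  have h := specσ.trace_eq_dimEig mem_Sσ_e
  rw [Pσ_e, trace_P2] at h
  exact_mod_cast h.symm

lemma trunc_σ_0 : trunc sigmaPP 0 = 0 := by
  rw [trunc]; norm_num

lemma trunc_σ_q : trunc sigmaPP (1/4) = ((1/4 : ℝ) : ℂ) • P1 := by
  rw [trunc, specσ.eigProj_eq mem_Sσ_q, Pσ_q]

lemma trunc_σ_e : trunc sigmaPP (3/8) = ((3/8 : ℝ) : ℂ) • P2 := by
  rw [trunc, specσ.eigProj_eq mem_Sσ_e, Pσ_e]

lemma evalsR_zero_mat {n : Type*} [Fintype n] [DecidableEq n] [Nonempty n] (i : n) :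
    evalsR (0 : Matrix n n ℂ) i = 0 := by
  have := evalsR_smul_one (n := n) 0 i
  simpa using this

lemma evalsR_ptB_σ_q (i : Fin 2) :
    evalsR (ptraceB (trunc sigmaPP (1/4))) i = 1/8 := by
  rw [trunc_σ_q, ptraceB_smul, ptraceB_P1, smul_smul,
    show ((1/4 : ℝ) : ℂ) * ((1/2 : ℝ) : ℂ) = ((1/8 : ℝ) : ℂ) by push_cast; norm_num]
  exact evalsR_smul_one (1/8) i

lemma evalsR_ptB_σ_e (i : Fin 2) :
    evalsR (ptraceB (trunc sigmaPP (3/8))) i = 3/8 := by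
  rw [trunc_σ_e, ptraceB_smul, ptraceB_P2, smul_smul,
    show ((3/8 : ℝ) : ℂ) * ((1 : ℝ) : ℂ) = ((3/8 : ℝ) : ℂ) by push_cast; norm_num]
  exact evalsR_smul_one (3/8) i

lemma evalsR_ptA_σ_q (i : Fin 2) :
    evalsR (ptraceA (trunc sigmaPP (1/4))) i = 1/8 := by
  rw [trunc_σ_q, ptraceA_smul, ptraceA_P1, smul_smul,
    show ((1/4 : ℝ) : ℂ) * ((1/2 : ℝ) : ℂ) = ((1/8 : ℝ) : ℂ) by push_cast; norm_num]
  exact evalsR_smul_one (1/8) i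

lemma evalsR_ptA_σ_e (i : Fin 2) :
    evalsR (ptraceA (trunc sigmaPP (3/8))) i = 3/8 := by
  rw [trunc_σ_e, ptraceA_smul, ptraceA_P2, smul_smul,
    show ((3/8 : ℝ) : ℂ) * ((1 : ℝ) : ℂ) = ((3/8 : ℝ) : ℂ) by push_cast; norm_num]
  exact evalsR_smul_one (3/8) i

lemma MmeasA_σ : MmeasA sigmaPP = 1/4 := by
  rw [MmeasA, specσ.image_evalsR, sum_Sσ]
  have h0 : ∀ i : Fin 2, Mterm 0 (0 * (dimEig sigmaPP 0 : ℝ))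
      (evalsR (ptraceB (trunc sigmaPP 0)) i) = 0 := by
    intro i
    rw [trunc_σ_0, ptraceB_zero, evalsR_zero_mat, Mterm_lam_zero]
  rw [Fin.sum_univ_two, Fin.sum_univ_two, Fin.sum_univ_two, h0, h0]
  simp only [evalsR_ptB_σ_q, evalsR_ptB_σ_e, dimEig_σ_q, Nat.cast_one, mul_one,
    Mterm_quarter, Mterm_self]
  norm_num

lemma MmeasB_σ : MmeasB sigmaPP = 1/4 := by
  rw [MmeasB, specσ.image_evalsR, sum_Sσ]
  have h0 : ∀ i : Fin 2, Mterm 0 (0 * (dimEig sigmaPP 0 : ℝ))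
      (evalsR (ptraceA (trunc sigmaPP 0)) i) = 0 := by
    intro i
    rw [trunc_σ_0, ptraceA_zero, evalsR_zero_mat, Mterm_lam_zero]
  rw [Fin.sum_univ_two, Fin.sum_univ_two, Fin.sum_univ_two, h0, h0]
  simp only [evalsR_ptA_σ_q, evalsR_ptA_σ_e, dimEig_σ_q, Nat.cast_one, mul_one,
    Mterm_quarter, Mterm_self]
  norm_num

/-! big state -/

def S2 : Finset ℝ := {0, 1/16, 3/32, 9/64}

def Q2 : ℝ → Matrix ((Fin 2 × Fin 2) × (Fin 2 × Fin 2)) ((Fin 2 × Fin 2) × (Fin 2 × Fin 2)) ℂ :=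
  fun η =>
  if η = 0 then regroupKron P0 P0 + regroupKron P0 P1 + regroupKron P0 P2
      + regroupKron P1 P0 + regroupKron P2 P0
  else if η = 1/16 then regroupKron P1 P1
  else if η = 3/32 then regroupKron P1 P2 + regroupKron P2 P1
  else if η = 9/64 then regroupKron P2 P2
  else 0

lemma Q2_0 : Q2 0 = regroupKron P0 P0 + regroupKron P0 P1 + regroupKron P0 P2
    + regroupKron P1 P0 + regroupKron P2 P0 := by simp [Q2]
lemma Q2_a : Q2 (1/16) = regroupKron P1 P1 := by norm_num [Q2]
lemma Q2_b : Q2 (3/32) = regroupKron P1 P2 + regroupKron P2 P1 := by norm_num [Q2]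
lemma Q2_c : Q2 (9/64) = regroupKron P2 P2 := by norm_num [Q2]

lemma mem_S2_0 : (0:ℝ) ∈ S2 := by norm_num [S2]
lemma mem_S2_a : (1/16:ℝ) ∈ S2 := by norm_num [S2]
lemma mem_S2_b : (3/32:ℝ) ∈ S2 := by norm_num [S2]
lemma mem_S2_c : (9/64:ℝ) ∈ S2 := by norm_num [S2]

lemma sum_S2 {M : Type*} [AddCommMonoid M] (f : ℝ → M) :
    ∑ η ∈ S2, f η = f 0 + (f (1/16) + (f (3/32) + f (9/64))) := by
  rw [S2, Finset.sum_insert (by norm_num), Finset.sum_insert (by norm_num),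
    Finset.sum_insert (by norm_num), Finset.sum_singleton]

lemma spec2 : SpecData (regroupKron sigmaPP sigmaPP) S2 Q2 := by
  constructor
  · rw [sum_S2, Q2_0, Q2_a, Q2_b, Q2_c, sigma_eq]
    simp only [regroupKron_add_left, regroupKron_add_right, regroupKron_smul_left,
      regroupKron_smul_right, smul_smul]
    push_cast
    module
  · intro η hη
    rw [S2] at hη
    simp only [Finset.mem_insert, Finset.mem_singleton] at hη
    have e0 : P0ᴴ = P0 := P0_herm
    have e1 : P1ᴴ = P1 := P1_herm
    have e2 : P2ᴴ = P2 := P2_herm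
    rcases hη with rfl | rfl | rfl | rfl
    · show (Q2 0)ᴴ = Q2 0
      rw [Q2_0]
      simp only [conjTranspose_add, regroupKron_conjTranspose, e0, e1, e2]
    · show (Q2 (1/16))ᴴ = Q2 (1/16)
      rw [Q2_a]
      simp only [regroupKron_conjTranspose, e1]
    · show (Q2 (3/32))ᴴ = Q2 (3/32)
      rw [Q2_b]
      simp only [conjTranspose_add, regroupKron_conjTranspose, e1, e2]
    · show (Q2 (9/64))ᴴ = Q2 (9/64)
      rw [Q2_c]
      simp only [regroupKron_conjTranspose, e2]
  · intro η hη μ hμ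
    rw [S2] at hη hμ
    simp only [Finset.mem_insert, Finset.mem_singleton] at hη hμ
    rcases hη with rfl | rfl | rfl | rfl <;> rcases hμ with rfl | rfl | rfl | rfl <;>
      norm_num [Q2_0, Q2_a, Q2_b, Q2_c] <;>
      simp only [add_mul, mul_add, regroupKron_mul, P0_mul_P0, P0_mul_P1, P0_mul_P2,
        P1_mul_P0, P1_mul_P1, P1_mul_P2, P2_mul_P0, P2_mul_P1, P2_mul_P2,
        regroupKron_zero_left, regroupKron_zero_right, add_zero, zero_add] <;> abel
  · rw [sum_S2, Q2_0, Q2_a, Q2_b, Q2_c, ← regroupKron_one, ← P_sum]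
    rw [regroupKron_add_left, regroupKron_add_left,
      regroupKron_add_right, regroupKron_add_right, regroupKron_add_right,
      regroupKron_add_right, regroupKron_add_right, regroupKron_add_right]
    abel
  · intro η hη
    rw [S2] at hη
    simp only [Finset.mem_insert, Finset.mem_singleton] at hη
    rcases hη with rfl | rfl | rfl | rfl
    · rw [Q2_0]
      exact ne_zero_of_trace (by
        norm_num [Matrix.trace_add, regroupKron_trace, trace_P0, trace_P1, trace_P2])
    · rw [Q2_a]
      exact ne_zero_of_trace (by simp [regroupKron_trace, trace_P1])
    · rw [Q2_b]
      exact ne_zero_of_trace (by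
        norm_num [Matrix.trace_add, regroupKron_trace, trace_P1, trace_P2])
    · rw [Q2_c]
      exact ne_zero_of_trace (by norm_num [regroupKron_trace, trace_P2])

lemma dimEig_2_a : dimEig (regroupKron sigmaPP sigmaPP) (1/16) = 1 := by
  have h := spec2.trace_eq_dimEig mem_S2_a
  rw [Q2_a, regroupKron_trace, trace_P1] at h
  exact_mod_cast (by simpa using h.symm : ((dimEig (regroupKron sigmaPP sigmaPP) (1/16) : ℕ) : ℂ) = 1)

lemma trunc_2_0 : trunc (regroupKron sigmaPP sigmaPP) 0 = 0 := by
  rw [trunc]; norm_num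

lemma trunc_2_a : trunc (regroupKron sigmaPP sigmaPP) (1/16) = ((1/16 : ℝ) : ℂ) • Q2 (1/16) := by
  rw [trunc, spec2.eigProj_eq mem_S2_a]

lemma trunc_2_b : trunc (regroupKron sigmaPP sigmaPP) (3/32) = ((3/32 : ℝ) : ℂ) • Q2 (3/32) := by
  rw [trunc, spec2.eigProj_eq mem_S2_b]

lemma trunc_2_c : trunc (regroupKron sigmaPP sigmaPP) (9/64) = ((9/64 : ℝ) : ℂ) • Q2 (9/64) := by
  rw [trunc, spec2.eigProj_eq mem_S2_c]

lemma smul_one_kron_smul_one (c d : ℂ) :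
    ((c • (1 : Matrix (Fin 2) (Fin 2) ℂ)) ⊗ₖ (d • (1 : Matrix (Fin 2) (Fin 2) ℂ)))
      = (c * d) • (1 : Matrix (Fin 2 × Fin 2) (Fin 2 × Fin 2) ℂ) := by
  rw [smul_kronecker, kronecker_smul, one_kronecker_one, smul_smul]

lemma evalsR_ptB_2_a (i : Fin 2 × Fin 2) :
    evalsR (ptraceB (trunc (regroupKron sigmaPP sigmaPP) (1/16))) i = 1/64 := by
  rw [trunc_2_a, ptraceB_smul, Q2_a, ptraceB_regroupKron, ptraceB_P1, smul_one_kron_smul_one,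
    smul_smul]
  rw [show ((1/16 : ℝ) : ℂ) * (((1/2 : ℝ) : ℂ) * ((1/2 : ℝ) : ℂ)) = ((1/64 : ℝ) : ℂ) by
    push_cast; norm_num]
  exact evalsR_smul_one (1/64) i

lemma evalsR_ptB_2_b (i : Fin 2 × Fin 2) :
    evalsR (ptraceB (trunc (regroupKron sigmaPP sigmaPP) (3/32))) i = 3/32 := by
  rw [trunc_2_b, ptraceB_smul, Q2_b, ptraceB_add, ptraceB_regroupKron, ptraceB_regroupKron,
    ptraceB_P1, ptraceB_P2, smul_one_kron_smul_one, smul_one_kron_smul_one]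
  rw [show ((1/2 : ℝ) : ℂ) * ((1 : ℝ) : ℂ) = ((1/2 : ℝ) : ℂ) by push_cast; norm_num]
  rw [show ((1 : ℝ) : ℂ) * ((1/2 : ℝ) : ℂ) = ((1/2 : ℝ) : ℂ) by push_cast; norm_num]
  rw [← add_smul, smul_smul]
  rw [show ((3/32 : ℝ) : ℂ) * (((1/2 : ℝ) : ℂ) + ((1/2 : ℝ) : ℂ)) = ((3/32 : ℝ) : ℂ) by
    push_cast; norm_num]
  exact evalsR_smul_one (3/32) i

lemma evalsR_ptB_2_c (i : Fin 2 × Fin 2) :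
    evalsR (ptraceB (trunc (regroupKron sigmaPP sigmaPP) (9/64))) i = 9/64 := by
  rw [trunc_2_c, ptraceB_smul, Q2_c, ptraceB_regroupKron, ptraceB_P2, smul_one_kron_smul_one,
    smul_smul]
  rw [show ((9/64 : ℝ) : ℂ) * (((1 : ℝ) : ℂ) * ((1 : ℝ) : ℂ)) = ((9/64 : ℝ) : ℂ) by
    push_cast; norm_num]
  exact evalsR_smul_one (9/64) i

lemma evalsR_ptA_2_a (i : Fin 2 × Fin 2) :
    evalsR (ptraceA (trunc (regroupKron sigmaPP sigmaPP) (1/16))) i = 1/64 := by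
  rw [trunc_2_a, ptraceA_smul, Q2_a, ptraceA_regroupKron, ptraceA_P1, smul_one_kron_smul_one,
    smul_smul]
  rw [show ((1/16 : ℝ) : ℂ) * (((1/2 : ℝ) : ℂ) * ((1/2 : ℝ) : ℂ)) = ((1/64 : ℝ) : ℂ) by
    push_cast; norm_num]
  exact evalsR_smul_one (1/64) i

lemma evalsR_ptA_2_b (i : Fin 2 × Fin 2) :
    evalsR (ptraceA (trunc (regroupKron sigmaPP sigmaPP) (3/32))) i = 3/32 := by
  rw [trunc_2_b, ptraceA_smul, Q2_b, ptraceA_add, ptraceA_regroupKron, ptraceA_regroupKron,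
    ptraceA_P1, ptraceA_P2, smul_one_kron_smul_one, smul_one_kron_smul_one]
  rw [show ((1/2 : ℝ) : ℂ) * ((1 : ℝ) : ℂ) = ((1/2 : ℝ) : ℂ) by push_cast; norm_num]
  rw [show ((1 : ℝ) : ℂ) * ((1/2 : ℝ) : ℂ) = ((1/2 : ℝ) : ℂ) by push_cast; norm_num]
  rw [← add_smul, smul_smul]
  rw [show ((3/32 : ℝ) : ℂ) * (((1/2 : ℝ) : ℂ) + ((1/2 : ℝ) : ℂ)) = ((3/32 : ℝ) : ℂ) by
    push_cast; norm_num]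
  exact evalsR_smul_one (3/32) i

lemma evalsR_ptA_2_c (i : Fin 2 × Fin 2) :
    evalsR (ptraceA (trunc (regroupKron sigmaPP sigmaPP) (9/64))) i = 9/64 := by
  rw [trunc_2_c, ptraceA_smul, Q2_c, ptraceA_regroupKron, ptraceA_P2, smul_one_kron_smul_one,
    smul_smul]
  rw [show ((9/64 : ℝ) : ℂ) * (((1 : ℝ) : ℂ) * ((1 : ℝ) : ℂ)) = ((9/64 : ℝ) : ℂ) by
    push_cast; norm_num]
  exact evalsR_smul_one (9/64) i

lemma sum_prod_const {f : Fin 2 × Fin 2 → ℝ} (c : ℝ) (h : ∀ i, f i = c) :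
    ∑ i : Fin 2 × Fin 2, f i = 4 * c := by
  rw [Fintype.sum_prod_type, Fin.sum_univ_two, Fin.sum_univ_two, Fin.sum_univ_two, h, h, h, h]
  ring

lemma MmeasA_2 : MmeasA (regroupKron sigmaPP sigmaPP) = 1/8 := by
  rw [MmeasA, spec2.image_evalsR, sum_S2]
  have h0 : (∑ i : Fin 2 × Fin 2, Mterm 0 (0 * (dimEig (regroupKron sigmaPP sigmaPP) 0 : ℝ))
      (evalsR (ptraceB (trunc (regroupKron sigmaPP sigmaPP) 0)) i)) = 0 := by
    apply Finset.sum_eq_zero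
    intro i _
    rw [trunc_2_0, ptraceB_zero, evalsR_zero_mat, Mterm_lam_zero]
  have ha : (∑ i : Fin 2 × Fin 2, Mterm (1/16)
      ((1/16) * (dimEig (regroupKron sigmaPP sigmaPP) (1/16) : ℝ))
      (evalsR (ptraceB (trunc (regroupKron sigmaPP sigmaPP) (1/16))) i)) = 4 * (1/32) := by
    apply sum_prod_const
    intro i
    rw [evalsR_ptB_2_a, dimEig_2_a, Nat.cast_one, mul_one, Mterm_sixteenth]
  have hb : (∑ i : Fin 2 × Fin 2, Mterm (3/32)
      ((3/32) * (dimEig (regroupKron sigmaPP sigmaPP) (3/32) : ℝ))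
      (evalsR (ptraceB (trunc (regroupKron sigmaPP sigmaPP) (3/32))) i)) = 0 := by
    apply Finset.sum_eq_zero
    intro i _
    rw [evalsR_ptB_2_b, Mterm_self]
  have hc : (∑ i : Fin 2 × Fin 2, Mterm (9/64)
      ((9/64) * (dimEig (regroupKron sigmaPP sigmaPP) (9/64) : ℝ))
      (evalsR (ptraceB (trunc (regroupKron sigmaPP sigmaPP) (9/64))) i)) = 0 := by
    apply Finset.sum_eq_zero
    intro i _
    rw [evalsR_ptB_2_c, Mterm_self]
  rw [h0, ha, hb, hc]
  norm_num

lemma MmeasB_2 : MmeasB (regroupKron sigmaPP sigmaPP) = 1/8 := by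
  rw [MmeasB, spec2.image_evalsR, sum_S2]
  have h0 : (∑ i : Fin 2 × Fin 2, Mterm 0 (0 * (dimEig (regroupKron sigmaPP sigmaPP) 0 : ℝ))
      (evalsR (ptraceA (trunc (regroupKron sigmaPP sigmaPP) 0)) i)) = 0 := by
    apply Finset.sum_eq_zero
    intro i _
    rw [trunc_2_0, ptraceA_zero, evalsR_zero_mat, Mterm_lam_zero]
  have ha : (∑ i : Fin 2 × Fin 2, Mterm (1/16)
      ((1/16) * (dimEig (regroupKron sigmaPP sigmaPP) (1/16) : ℝ))
      (evalsR (ptraceA (trunc (regroupKron sigmaPP sigmaPP) (1/16))) i)) = 4 * (1/32) := by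
    apply sum_prod_const
    intro i
    rw [evalsR_ptA_2_a, dimEig_2_a, Nat.cast_one, mul_one, Mterm_sixteenth]
  have hb : (∑ i : Fin 2 × Fin 2, Mterm (3/32)
      ((3/32) * (dimEig (regroupKron sigmaPP sigmaPP) (3/32) : ℝ))
      (evalsR (ptraceA (trunc (regroupKron sigmaPP sigmaPP) (3/32))) i)) = 0 := by
    apply Finset.sum_eq_zero
    intro i _
    rw [evalsR_ptA_2_b, Mterm_self]
  have hc : (∑ i : Fin 2 × Fin 2, Mterm (9/64)
      ((9/64) * (dimEig (regroupKron sigmaPP sigmaPP) (9/64) : ℝ))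
      (evalsR (ptraceA (trunc (regroupKron sigmaPP sigmaPP) (9/64))) i)) = 0 := by
    apply Finset.sum_eq_zero
    intro i _
    rw [evalsR_ptA_2_c, Mterm_self]
  rw [h0, ha, hb, hc]
  norm_num

end AuxAssembly

/-- `M` is not superadditive: `M_{A|B}(σ'') = 1/4` but
`M_{AC|BD}(σ'' ⊗ σ'') = 1/8 < 2 · (1/4)`. -/
theorem Mmeas_not_superadditive :
    Mmeas sigmaPP = 1 / 4 ∧
    Mmeas (regroupKron sigmaPP sigmaPP) = 1 / 8 ∧
    Mmeas (regroupKron sigmaPP sigmaPP) < Mmeas sigmaPP + Mmeas sigmaPP := by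
  have h1 : Mmeas sigmaPP = 1/4 := by
    rw [Mmeas, MmeasA_σ, MmeasB_σ]; norm_num
  have h2 : Mmeas (regroupKron sigmaPP sigmaPP) = 1/8 := by
    rw [Mmeas, MmeasA_2, MmeasB_2]; norm_num
  refine ⟨h1, h2, ?_⟩
  rw [h1, h2]; norm_num

end
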